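/- Let n ≥ 3 be odd and let q be the 2n×2n antidiagonal matrix (q_{jk} = 1 iff j + k = 2n+1), with so(2n,ℂ) = {Z ∈ gl(2n,ℂ) : Z q + q Zᵀ = 0}. Let σ be the permutation of {1,…,2n} with σ(1) = n, σ(n) = 2n, σ(n+1) = 1, σ(2n) = n+1, and σ(j) = n+j, σ(n+j) = j for 2 ≤ j ≤ n−1, and let Λ be the permutation matrix with Λ e_j = e_{σ(j)}. Then Λᵀ q Λ = q, Λ⁴ = Id, conjugation Z ↦ Λ Z Λ⁻¹ maps so(2n,ℂ) to itself and has order exactly 4 on so(2n,ℂ), and its eigenspaces in so(2n,ℂ) for the eigenvalues 1, i, −1, −i have ℂ-dimensions n² − 3n + 3, 2n − 2, (n−1)², and 2n − 2 respectively. -/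

import Mathlib

open Matrix

noncomputable section

/-- The antidiagonal symmetric form `q` of order `2n` (`q_{jk} = 1` iff `j+k = 2n+1`,
1-based). -/
def qD2 (n : ℕ) : Matrix (Fin (2*n)) (Fin (2*n)) ℂ :=
  Matrix.of fun i j => if (i : ℕ) + (j : ℕ) + 1 = 2*n then 1 else 0

/-- The permutation `σ` of `{1,…,2n}` (1-based) with `σ(1) = n`, `σ(n) = 2n`,
`σ(n+1) = 1`, `σ(2n) = n+1`, and `σ(j) = n+j`, `σ(n+j) = j` for `2 ≤ j ≤ n−1`. -/
def sigmaD (n : ℕ) (j : ℕ) : ℕ :=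
  if j = 1 then n
  else if j = n then 2*n
  else if j = n+1 then 1
  else if j = 2*n then n+1
  else if j ≤ n then n + j
  else j - n

/-- The permutation matrix `Λ` with `Λ e_j = e_{σ(j)}`, i.e. `Λ_{σ(j),j} = 1`. -/
def LamD2 (n : ℕ) : Matrix (Fin (2*n)) (Fin (2*n)) ℂ :=
  Matrix.of fun i j => if (i : ℕ) + 1 = sigmaD n ((j : ℕ) + 1) then 1 else 0

/-- The orthogonal Lie algebra `so(2n,ℂ) = {Z : Z q + q Zᵀ = 0}`. -/
def soD2 (n : ℕ) : Set (Matrix (Fin (2*n)) (Fin (2*n)) ℂ) :=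
  {Z | Z * qD2 n + qD2 n * Zᵀ = 0}

/-- The eigenspace of conjugation by `Λ` in so(2n,ℂ) for the eigenvalue `μ`. -/
def eigD (n : ℕ) (μ : ℂ) : Submodule ℂ (Matrix (Fin (2*n)) (Fin (2*n)) ℂ) where
  carrier := {Z | (Z * qD2 n + qD2 n * Zᵀ = 0) ∧ LamD2 n * Z * (LamD2 n)⁻¹ = μ • Z}
  add_mem' := by
    rintro a b ⟨ha1, ha2⟩ ⟨hb1, hb2⟩
    constructor
    · rw [Matrix.add_mul, Matrix.transpose_add, Matrix.mul_add, add_add_add_comm, ha1, hb1,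
        add_zero]
    · rw [Matrix.mul_add, Matrix.add_mul, ha2, hb2, smul_add]
  zero_mem' := by simp
  smul_mem' := by
    rintro c a ⟨ha1, ha2⟩
    constructor
    · rw [Matrix.transpose_smul, Matrix.smul_mul, Matrix.mul_smul, ← smul_add, ha1,
        smul_zero]
    · rw [Matrix.mul_smul, Matrix.smul_mul, ha2]
      exact smul_comm _ _ _

section
variable {n : ℕ} (hn : 3 ≤ n)
include hn
set_option linter.unusedSectionVars false

lemma sig1 : sigmaD n 1 = n := by unfold sigmaD; split_ifs <;> omega
lemma sig2 : sigmaD n n = 2*n := by unfold sigmaD; split_ifs <;> omega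
lemma sig3 : sigmaD n (n+1) = 1 := by unfold sigmaD; split_ifs <;> omega
lemma sig4 : sigmaD n (2*n) = n+1 := by unfold sigmaD; split_ifs <;> omega
lemma sig5 {j : ℕ} (h1 : 2 ≤ j) (h2 : j ≤ n-1) : sigmaD n j = n + j := by
  unfold sigmaD; split_ifs <;> omega
lemma sig6 {j : ℕ} (h1 : n+2 ≤ j) (h2 : j ≤ 2*n-1) : sigmaD n j = j - n := by
  unfold sigmaD; split_ifs <;> omega

lemma sig_mem {j : ℕ} (h1 : 1 ≤ j) (h2 : j ≤ 2*n) : 1 ≤ sigmaD n j ∧ sigmaD n j ≤ 2*n := by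
  rcases eq_or_ne j 1 with rfl | e1
  · rw [sig1 hn]; omega
  rcases eq_or_ne j n with rfl | e2
  · rw [sig2 hn]; omega
  rcases eq_or_ne j (n+1) with rfl | e3
  · rw [sig3 hn]; omega
  rcases eq_or_ne j (2*n) with rfl | e4
  · rw [sig4 hn]; omega
  rcases le_or_gt j n with h | h
  · rw [sig5 hn (by omega) (by omega)]; omega
  · rw [sig6 hn (by omega) (by omega)]; omega

/-- σ² is (1 2n)(n n+1). -/
lemma sig_sq {j : ℕ} (h1 : 1 ≤ j) (h2 : j ≤ 2*n) :
    sigmaD n (sigmaD n j) =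
      if j = 1 then 2*n else if j = 2*n then 1 else if j = n then n+1
      else if j = n+1 then n else j := by
  rcases eq_or_ne j 1 with rfl | e1
  · rw [sig1 hn, sig2 hn]; simp
  rcases eq_or_ne j n with rfl | e2
  · rw [sig2 hn, sig4 hn]; split_ifs <;> omega
  rcases eq_or_ne j (n+1) with rfl | e3
  · rw [sig3 hn, sig1 hn]; split_ifs <;> omega
  rcases eq_or_ne j (2*n) with rfl | e4
  · rw [sig4 hn, sig3 hn]; split_ifs <;> omega
  rcases le_or_gt j n with h | h
  · rw [show sigmaD n j = n + j from sig5 hn (by omega) (by omega)]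
    rw [sig6 hn (by omega) (by omega)]
    split_ifs <;> omega
  · rw [show sigmaD n j = j - n from sig6 hn (by omega) (by omega)]
    rw [show sigmaD n (j-n) = n + (j-n) from sig5 hn (by omega) (by omega)]
    split_ifs <;> omega

lemma sig_sq_sq {j : ℕ} (h1 : 1 ≤ j) (h2 : j ≤ 2*n) :
    sigmaD n (sigmaD n (sigmaD n (sigmaD n j))) = j := by
  have m1 := sig_mem hn h1 h2
  have m2 := sig_mem hn m1.1 m1.2
  rw [sig_sq hn m2.1 m2.2, sig_sq hn h1 h2]
  split_ifs <;> omega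

lemma sig_ne {j : ℕ} (h1 : 1 ≤ j) (h2 : j ≤ 2*n) : sigmaD n j ≠ j := by
  rcases eq_or_ne j 1 with rfl | e1
  · rw [sig1 hn]; omega
  rcases eq_or_ne j n with rfl | e2
  · rw [sig2 hn]; omega
  rcases eq_or_ne j (n+1) with rfl | e3
  · rw [sig3 hn]; omega
  rcases eq_or_ne j (2*n) with rfl | e4
  · rw [sig4 hn]; omega
  rcases le_or_gt j n with h | h
  · rw [sig5 hn (by omega) (by omega)]; omega
  · rw [sig6 hn (by omega) (by omega)]; omega

/-- σ(2n+1-j) = 2n+1-σ(j) -/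
lemma sig_rho {j : ℕ} (h1 : 1 ≤ j) (h2 : j ≤ 2*n) :
    sigmaD n (2*n+1-j) = 2*n+1 - sigmaD n j := by
  rcases eq_or_ne j 1 with rfl | e1
  · have e : 2*n+1-1 = 2*n := by omega
    rw [sig1 hn, e, sig4 hn]; omega
  rcases eq_or_ne j n with he | e2
  · rw [he]
    have e : 2*n+1-n = n+1 := by omega
    rw [sig2 hn, e, sig3 hn]; omega
  rcases eq_or_ne j (n+1) with he | e3
  · rw [he]
    have e : 2*n+1-(n+1) = n := by omega
    rw [sig3 hn, e, sig2 hn]; omega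
  rcases eq_or_ne j (2*n) with he | e4
  · rw [he]
    have e : 2*n+1-2*n = 1 := by omega
    rw [sig4 hn, e, sig1 hn]; omega
  rcases le_or_gt j n with h | h
  · rw [sig6 hn (by omega) (by omega)]
    rw [sig5 hn (by omega) (by omega)]; omega
  · rw [sig5 hn (by omega) (by omega)]
    rw [sig6 hn (by omega) (by omega)]; omega

end

-- ===================== Permutation layer =====================
noncomputable section
open Equiv

/-- permutation matrix over ℂ -/
def PM {m : Type*} [DecidableEq m] (a : Equiv.Perm m) : Matrix m m ℂ :=
  a.toPEquiv.toMatrix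

lemma PM_apply {m : Type*} [DecidableEq m] (a : Equiv.Perm m) (i j : m) :
    PM a i j = if a i = j then 1 else 0 := by
  simp [PM, PEquiv.toMatrix_apply, Equiv.toPEquiv_apply]

lemma PM_mul {m : Type*} [DecidableEq m] [Fintype m] (a b : Equiv.Perm m) :
    PM a * PM b = PM (a.trans b) := by
  rw [PM, PM, PM, Equiv.toPEquiv_trans, PEquiv.toMatrix_trans]

lemma PM_one {m : Type*} [DecidableEq m] : PM (Equiv.refl m) = 1 := by
  rw [PM, Equiv.toPEquiv_refl, PEquiv.toMatrix_refl]

lemma PM_transpose {m : Type*} [DecidableEq m] (a : Equiv.Perm m) :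
    (PM a)ᵀ = PM a.symm := by
  rw [PM, PM, Equiv.toPEquiv_symm, PEquiv.toMatrix_symm]

lemma PM_mul_mat {m : Type*} [DecidableEq m] [Fintype m] (a : Equiv.Perm m)
    (M : Matrix m m ℂ) : PM a * M = M.submatrix a id :=
  PEquiv.toMatrix_toPEquiv_mul a M

lemma mat_mul_PM {m : Type*} [DecidableEq m] [Fintype m] (a : Equiv.Perm m)
    (M : Matrix m m ℂ) : M * PM a = M.submatrix id a.symm :=
  PEquiv.mul_toMatrix_toPEquiv M a

lemma PM_trace {m : Type*} [DecidableEq m] [Fintype m] (a : Equiv.Perm m) :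
    (PM a).trace = ((Finset.univ.filter fun i => a i = i).card : ℂ) := by
  rw [Matrix.trace, Finset.card_filter]
  push_cast
  apply Finset.sum_congr rfl
  intro i _
  by_cases h : a i = i <;> simp [Matrix.diag, PM_apply, h]

def tF (n : ℕ) (i : Fin (2*n)) : Fin (2*n) :=
  ⟨min (sigmaD n ((i : ℕ)+1)) (2*n) - 1, by have := i.isLt; omega⟩

lemma tF_val {n : ℕ} (hn : 3 ≤ n) (i : Fin (2*n)) :
    (tF n i : ℕ) + 1 = sigmaD n ((i : ℕ)+1) := by
  have h := sig_mem hn (j := (i:ℕ)+1) (by omega) (by have := i.isLt; omega)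
  simp only [tF]
  omega

def tPerm (n : ℕ) : Equiv.Perm (Fin (2*n)) :=
  if hn : 3 ≤ n then
    { toFun := tF n
      invFun := tF n ∘ tF n ∘ tF n
      left_inv := by
        intro i
        apply Fin.ext
        have h0 := tF_val hn i
        have h1 := tF_val hn (tF n i)
        have h2 := tF_val hn (tF n (tF n i))
        have h3 := tF_val hn (tF n (tF n (tF n i)))
        rw [h0] at h1; rw [h1] at h2; rw [h2] at h3
        have hs := sig_sq_sq hn (j := (i:ℕ)+1) (by omega) (by have := i.isLt; omega)
        simp only [Function.comp_apply]
        omega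
      right_inv := by
        intro i
        apply Fin.ext
        have h0 := tF_val hn i
        have h1 := tF_val hn (tF n i)
        have h2 := tF_val hn (tF n (tF n i))
        have h3 := tF_val hn (tF n (tF n (tF n i)))
        rw [h0] at h1; rw [h1] at h2; rw [h2] at h3
        have hs := sig_sq_sq hn (j := (i:ℕ)+1) (by omega) (by have := i.isLt; omega)
        simp only [Function.comp_apply]
        omega }
  else Equiv.refl _

lemma tPerm_val {n : ℕ} (hn : 3 ≤ n) (i : Fin (2*n)) :
    ((tPerm n i : Fin (2*n)) : ℕ) + 1 = sigmaD n ((i : ℕ)+1) := by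
  rw [tPerm, dif_pos hn]
  exact tF_val hn i

def rPerm (n : ℕ) : Equiv.Perm (Fin (2*n)) where
  toFun i := ⟨2*n - 1 - (i : ℕ), by have := i.isLt; omega⟩
  invFun i := ⟨2*n - 1 - (i : ℕ), by have := i.isLt; omega⟩
  left_inv i := by apply Fin.ext; have := i.isLt; simp; omega
  right_inv i := by apply Fin.ext; have := i.isLt; simp; omega

lemma rPerm_val {n : ℕ} (i : Fin (2*n)) : ((rPerm n i : Fin (2*n)) : ℕ) = 2*n - 1 - (i:ℕ) := rfl

section
variable {n : ℕ} (hn : 3 ≤ n)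
include hn
set_option linter.unusedSectionVars false

lemma LamD2_eq : LamD2 n = PM (tPerm n).symm := by
  ext i j
  have hv := tPerm_val hn j
  have hsym : (tPerm n).symm i = j ↔ i = tPerm n j := by
    constructor
    · intro h; rw [← h]; simp
    · intro h; rw [h]; simp
  rw [PM_apply]
  simp only [LamD2, Matrix.of_apply]
  by_cases h : (i:ℕ) + 1 = sigmaD n ((j:ℕ)+1)
  · rw [if_pos h, if_pos]
    rw [hsym]
    apply Fin.ext
    omega
  · rw [if_neg h, if_neg]
    rw [hsym]
    intro hc
    rw [hc] at h
    omega

lemma qD2_eq : qD2 n = PM (rPerm n) := by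
  ext i j
  have hi := i.isLt
  have hj := j.isLt
  rw [PM_apply]
  simp only [qD2, Matrix.of_apply]
  by_cases h : (i:ℕ) + (j:ℕ) + 1 = 2*n
  · rw [if_pos h, if_pos]
    apply Fin.ext
    rw [rPerm_val]
    omega
  · rw [if_neg h, if_neg]
    intro hc
    have := congrArg (fun x : Fin (2*n) => (x : ℕ)) hc
    simp only [rPerm_val] at this
    omega

lemma tPerm_pow4_apply (i : Fin (2*n)) :
    tPerm n (tPerm n (tPerm n (tPerm n i))) = i := by
  apply Fin.ext
  have h0 := tPerm_val hn i
  have h1 := tPerm_val hn (tPerm n i)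
  have h2 := tPerm_val hn (tPerm n (tPerm n i))
  have h3 := tPerm_val hn (tPerm n (tPerm n (tPerm n i)))
  rw [h0] at h1; rw [h1] at h2; rw [h2] at h3
  have hs := sig_sq_sq hn (j := (i:ℕ)+1) (by omega) (by have := i.isLt; omega)
  omega

lemma tPerm_rPerm_comm_apply (i : Fin (2*n)) :
    rPerm n (tPerm n i) = tPerm n (rPerm n i) := by
  apply Fin.ext
  have hi := i.isLt
  have h0 := tPerm_val hn i
  have h1 := tPerm_val hn (rPerm n i)
  have hrt : ((rPerm n) ((tPerm n) i) : ℕ) = 2*n - 1 - ((tPerm n i : Fin (2*n)) : ℕ) := rfl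
  have hr : ((rPerm n i : Fin (2*n)) : ℕ) = 2*n - 1 - (i:ℕ) := rfl
  rw [hr] at h1
  have hs := sig_rho hn (j := (i:ℕ)+1) (by omega) (by omega)
  have hm := sig_mem hn (j := (i:ℕ)+1) (by omega) (by omega)
  have he : (2*n+1) - ((i:ℕ)+1) = (2*n - 1 - (i:ℕ)) + 1 := by omega
  rw [he] at hs
  rw [hrt]
  omega

lemma tPerm_ne (i : Fin (2*n)) : tPerm n i ≠ i := by
  have h0 := tPerm_val hn i
  have hs := sig_ne hn (j := (i:ℕ)+1) (by omega) (by have := i.isLt; omega)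
  intro hc
  rw [hc] at h0
  omega

lemma tPerm_sq_fix (i : Fin (2*n)) :
    tPerm n (tPerm n i) = i ↔
      ¬((i:ℕ) = 0 ∨ (i:ℕ) = n - 1 ∨ (i:ℕ) = n ∨ (i:ℕ) = 2*n - 1) := by
  have hi := i.isLt
  have h0 := tPerm_val hn i
  have h1 := tPerm_val hn (tPerm n i)
  rw [h0] at h1
  have hs := sig_sq hn (j := (i:ℕ)+1) (by omega) (by omega)
  rw [Fin.ext_iff]
  split_ifs at hs <;> omega

end
end

-- ===================== counts and matrix relations =====================
noncomputable section
open Equiv Finset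

section
variable {n : ℕ} (hn : 3 ≤ n)
include hn
set_option linter.unusedSectionVars false

lemma uPerm_fix_iff (i : Fin (2*n)) : (tPerm n).symm i = i ↔ tPerm n i = i := by
  constructor
  · intro h
    conv_lhs => rw [← h]
    simp
  · intro h
    conv_lhs => rw [← h]
    simp

lemma fixcard_u : (univ.filter fun i => (tPerm n).symm i = i).card = 0 := by
  rw [Finset.card_eq_zero, Finset.filter_eq_empty_iff]
  intro i _
  rw [uPerm_fix_iff hn]
  exact tPerm_ne hn i

lemma fixcard_u3 :
    (univ.filter fun i => (tPerm n).symm ((tPerm n).symm ((tPerm n).symm i)) = i).card = 0 := by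
  rw [Finset.card_eq_zero, Finset.filter_eq_empty_iff]
  intro i _
  intro hc
  have h4 := tPerm_pow4_apply hn i
  -- apply t³ to hc : u³ i = i
  have : tPerm n ((tPerm n) ((tPerm n) ((tPerm n).symm ((tPerm n).symm ((tPerm n).symm i)))))
      = tPerm n ((tPerm n) ((tPerm n) i)) := by rw [hc]
  simp only [Equiv.apply_symm_apply] at this
  -- this : i = t (t (t i))  hence t i = t⁴ i = i
  have h5 : tPerm n i = tPerm n (tPerm n (tPerm n (tPerm n i))) := by
    rw [← this]
  rw [tPerm_pow4_apply hn] at h5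
  exact tPerm_ne hn i h5

lemma fixcard_u2 :
    (univ.filter fun i => (tPerm n).symm ((tPerm n).symm i) = i).card = 2*n - 4 := by
  classical
  have hiff : ∀ i : Fin (2*n), ((tPerm n).symm ((tPerm n).symm i) = i ↔
      tPerm n (tPerm n i) = i) := by
    intro i
    constructor
    · intro h
      conv_lhs => rw [← h]
      simp
    · intro h
      conv_lhs => rw [← h]
      simp
  have hset : (univ.filter fun i => ¬ (tPerm n).symm ((tPerm n).symm i) = i)
      = ({⟨0, by omega⟩, ⟨n-1, by omega⟩, ⟨n, by omega⟩, ⟨2*n-1, by omega⟩}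
          : Finset (Fin (2*n))) := by
    ext i
    simp only [Finset.mem_filter, Finset.mem_univ, true_and, Finset.mem_insert,
      Finset.mem_singleton]
    rw [hiff i, tPerm_sq_fix hn i, not_not]
    simp only [Fin.ext_iff]
  have hcard4 : (({⟨0, by omega⟩, ⟨n-1, by omega⟩, ⟨n, by omega⟩, ⟨2*n-1, by omega⟩}
      : Finset (Fin (2*n)))).card = 4 := by
    rw [Finset.card_insert_of_notMem (by simp [Fin.ext_iff]; omega),
      Finset.card_insert_of_notMem (by simp [Fin.ext_iff]; omega),
      Finset.card_insert_of_notMem (by simp [Fin.ext_iff]; omega), Finset.card_singleton]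
  have hsplit := Finset.card_filter_add_card_filter_not
    (s := (univ : Finset (Fin (2*n))))
    (p := fun i => (tPerm n).symm ((tPerm n).symm i) = i)
  rw [hset, hcard4] at hsplit
  have : (univ : Finset (Fin (2*n))).card = 2*n := by simp
  omega

end
end

-- ===================== matrix relations =====================
noncomputable section
open Equiv Finset

def LamTm (n : ℕ) : Matrix (Fin (2*n)) (Fin (2*n)) ℂ := PM (tPerm n)

section
variable {n : ℕ} (hn : 3 ≤ n)
include hn
set_option linter.unusedSectionVars false

lemma lam_mul_lamT : LamD2 n * LamTm n = 1 := by
  rw [LamD2_eq hn, LamTm, PM_mul]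
  have h : (tPerm n).symm.trans (tPerm n) = Equiv.refl (Fin (2*n)) := by
    apply Equiv.ext; intro i
    simp
  rw [h, PM_one]

lemma lamT_mul_lam : LamTm n * LamD2 n = 1 := by
  rw [LamD2_eq hn, LamTm, PM_mul]
  have h : (tPerm n).trans (tPerm n).symm = Equiv.refl (Fin (2*n)) := by
    apply Equiv.ext; intro i
    simp
  rw [h, PM_one]

lemma lam_inv : (LamD2 n)⁻¹ = LamTm n :=
  Matrix.inv_eq_right_inv (lam_mul_lamT hn)

lemma q_mul_q : qD2 n * qD2 n = 1 := by
  rw [qD2_eq hn, PM_mul]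
  have h : (rPerm n).trans (rPerm n) = Equiv.refl (Fin (2*n)) := by
    apply Equiv.ext; intro i
    have := i.isLt
    simp only [Equiv.trans_apply, Equiv.refl_apply, Fin.ext_iff, rPerm_val]
    omega
  rw [h, PM_one]

lemma q_transpose : (qD2 n)ᵀ = qD2 n := by
  rw [qD2_eq hn, PM_transpose]
  have h : (rPerm n).symm = rPerm n := by
    apply Equiv.ext; intro i
    rw [Equiv.symm_apply_eq, Fin.ext_iff, rPerm_val, rPerm_val]
    have := i.isLt
    omega
  rw [h]

lemma lam_transpose : (LamD2 n)ᵀ = LamTm n := by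
  rw [LamD2_eq hn, PM_transpose, LamTm, Equiv.symm_symm]

lemma lamT_transpose : (LamTm n)ᵀ = LamD2 n := by
  rw [← lam_transpose hn, Matrix.transpose_transpose]

lemma q_comm_lam : qD2 n * LamD2 n = LamD2 n * qD2 n := by
  rw [qD2_eq hn, LamD2_eq hn, PM_mul, PM_mul]
  have h : (rPerm n).trans (tPerm n).symm = (tPerm n).symm.trans (rPerm n) := by
    apply Equiv.ext; intro i
    simp only [Equiv.trans_apply]
    apply (tPerm n).injective
    rw [Equiv.apply_symm_apply, ← tPerm_rPerm_comm_apply hn, Equiv.apply_symm_apply]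
  rw [h]

lemma q_comm_lamT : qD2 n * LamTm n = LamTm n * qD2 n := by
  have h := q_comm_lam hn
  calc qD2 n * LamTm n = 1 * qD2 n * LamTm n := by rw [Matrix.one_mul]
    _ = LamTm n * LamD2 n * qD2 n * LamTm n := by rw [lamT_mul_lam hn]
    _ = LamTm n * (LamD2 n * qD2 n) * LamTm n := by rw [Matrix.mul_assoc (LamTm n)]
    _ = LamTm n * (qD2 n * LamD2 n) * LamTm n := by rw [h]
    _ = LamTm n * qD2 n * (LamD2 n * LamTm n) := by
          rw [← Matrix.mul_assoc, Matrix.mul_assoc (LamTm n * qD2 n)]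
    _ = LamTm n * qD2 n := by rw [lam_mul_lamT hn, Matrix.mul_one]

lemma lam_pow4 : LamD2 n ^ 4 = 1 := by
  have hu : ((tPerm n).symm.trans ((tPerm n).symm.trans ((tPerm n).symm.trans (tPerm n).symm)))
      = Equiv.refl (Fin (2*n)) := by
    apply Equiv.ext; intro i
    simp only [Equiv.trans_apply, Equiv.refl_apply]
    apply (tPerm n).injective
    apply (tPerm n).injective
    apply (tPerm n).injective
    apply (tPerm n).injective
    simp only [Equiv.apply_symm_apply]
    rw [tPerm_pow4_apply hn]
  have h4 : LamD2 n ^ 4 = LamD2 n * (LamD2 n * (LamD2 n * LamD2 n)) := by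
    simp [pow_succ, Matrix.mul_assoc]
  rw [h4, LamD2_eq hn, PM_mul, PM_mul, PM_mul, hu, PM_one]

lemma part1_holds : (LamD2 n)ᵀ * qD2 n * LamD2 n = qD2 n := by
  rw [lam_transpose hn, Matrix.mul_assoc, q_comm_lam hn, ← Matrix.mul_assoc,
    lamT_mul_lam hn, Matrix.one_mul]

-- traces
lemma tr_lam : (LamD2 n).trace = 0 := by
  rw [LamD2_eq hn, PM_trace]
  rw [fixcard_u hn]
  simp

lemma tr_lam2 : (LamD2 n * LamD2 n).trace = ((2*n - 4 : ℕ) : ℂ) := by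
  rw [LamD2_eq hn, PM_mul, PM_trace]
  have h : (univ.filter fun i => ((tPerm n).symm.trans (tPerm n).symm) i = i)
      = (univ.filter fun i => (tPerm n).symm ((tPerm n).symm i) = i) := by
    apply Finset.filter_congr
    intro i _
    simp [Equiv.trans_apply]
  rw [h, fixcard_u2 hn]

lemma tr_lam3 : (LamD2 n * (LamD2 n * LamD2 n)).trace = 0 := by
  rw [LamD2_eq hn, PM_mul, PM_mul, PM_trace]
  have h : (univ.filter fun i =>
        ((tPerm n).symm.trans ((tPerm n).symm.trans (tPerm n).symm)) i = i)
      = (univ.filter fun i => (tPerm n).symm ((tPerm n).symm ((tPerm n).symm i)) = i) := by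
    apply Finset.filter_congr
    intro i _
    simp [Equiv.trans_apply]
  rw [h, fixcard_u3 hn]
  simp

lemma tr_one_mat : (1 : Matrix (Fin (2*n)) (Fin (2*n)) ℂ).trace = ((2*n : ℕ) : ℂ) := by
  rw [Matrix.trace_one]
  simp

end
end

-- ===================== endomorphism layer =====================
noncomputable section
open Matrix LinearMap
set_option linter.unusedSectionVars false

section General
variable {m : Type*} [Fintype m] [DecidableEq m]

lemma stdBasis_repr (M : Matrix m m ℂ) (p : m × m) :
    (Matrix.stdBasis ℂ m m).repr M p = M p.1 p.2 := by
  simp [Matrix.stdBasis, Module.Basis.repr_reindex]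

lemma trace_matrix_end (f : Matrix m m ℂ →ₗ[ℂ] Matrix m m ℂ) :
    LinearMap.trace ℂ _ f = ∑ p : m × m, f (Matrix.single p.1 p.2 1) p.1 p.2 := by
  rw [LinearMap.trace_eq_matrix_trace ℂ (Matrix.stdBasis ℂ m m)]
  rw [Matrix.trace]
  congr 1
  ext p
  rw [Matrix.diag, LinearMap.toMatrix_apply, stdBasis_repr, Matrix.stdBasis_eq_single]

/-- Z ↦ A Z B -/
def lmLR (A B : Matrix m m ℂ) : Matrix m m ℂ →ₗ[ℂ] Matrix m m ℂ where
  toFun Z := A * Z * B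
  map_add' x y := by noncomm_ring
  map_smul' c x := by simp [Matrix.mul_smul, Matrix.smul_mul]

/-- Z ↦ A Zᵀ B -/
def lmTR (A B : Matrix m m ℂ) : Matrix m m ℂ →ₗ[ℂ] Matrix m m ℂ where
  toFun Z := A * Zᵀ * B
  map_add' x y := by simp [Matrix.transpose_add]; noncomm_ring
  map_smul' c x := by simp [Matrix.transpose_smul, Matrix.mul_smul, Matrix.smul_mul]

lemma lmLR_apply (A B Z : Matrix m m ℂ) : lmLR A B Z = A * Z * B := rfl
lemma lmTR_apply (A B Z : Matrix m m ℂ) : lmTR A B Z = A * Zᵀ * B := rfl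

lemma trace_lmLR (A B : Matrix m m ℂ) :
    LinearMap.trace ℂ _ (lmLR A B) = A.trace * B.trace := by
  rw [trace_matrix_end]
  have h : ∀ p : m × m, lmLR A B (Matrix.single p.1 p.2 1) p.1 p.2
      = A p.1 p.1 * B p.2 p.2 := by
    rintro ⟨i, j⟩
    simp [lmLR_apply, Matrix.mul_apply, Matrix.single, ite_and, Finset.mul_sum,
      Finset.sum_mul]
  rw [Finset.sum_congr rfl fun p _ => h p]
  rw [Matrix.trace, Matrix.trace, Finset.sum_mul_sum, ← Finset.sum_product']
  rfl

lemma trace_lmTR (A B : Matrix m m ℂ) :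
    LinearMap.trace ℂ _ (lmTR A B) = (A * Bᵀ).trace := by
  rw [trace_matrix_end]
  have h : ∀ p : m × m, lmTR A B (Matrix.single p.1 p.2 1) p.1 p.2
      = A p.1 p.2 * B p.1 p.2 := by
    rintro ⟨i, j⟩
    simp [lmTR_apply, Matrix.mul_apply, Matrix.single, Matrix.transpose_apply, ite_and,
      Finset.mul_sum, Finset.sum_mul]
  rw [Finset.sum_congr rfl fun p _ => h p]
  simp [Matrix.trace, Matrix.diag, Matrix.mul_apply, Matrix.transpose_apply,
    Fintype.sum_prod_type]

lemma lmLR_mul_lmLR (A B C D : Matrix m m ℂ) :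
    lmLR A B * lmLR C D = lmLR (A*C) (D*B) := by
  apply LinearMap.ext
  intro Z
  simp [Module.End.mul_apply, lmLR_apply, Matrix.mul_assoc]

lemma lmLR_mul_lmTR (A B C D : Matrix m m ℂ) :
    lmLR A B * lmTR C D = lmTR (A*C) (D*B) := by
  apply LinearMap.ext
  intro Z
  simp [Module.End.mul_apply, lmLR_apply, lmTR_apply, Matrix.mul_assoc]

lemma lmTR_mul_lmLR (A B C D : Matrix m m ℂ) :
    lmTR A B * lmLR C D = lmTR (A*Dᵀ) (Cᵀ*B) := by
  apply LinearMap.ext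
  intro Z
  simp [Module.End.mul_apply, lmLR_apply, lmTR_apply, Matrix.transpose_mul, Matrix.mul_assoc]

lemma lmTR_mul_lmTR (A B C D : Matrix m m ℂ) :
    lmTR A B * lmTR C D = lmLR (A*Dᵀ) (Cᵀ*B) := by
  apply LinearMap.ext
  intro Z
  simp [Module.End.mul_apply, lmLR_apply, lmTR_apply, Matrix.transpose_mul,
    Matrix.transpose_transpose, Matrix.mul_assoc]

lemma lmLR_one : lmLR (1 : Matrix m m ℂ) 1 = 1 := by
  apply LinearMap.ext
  intro Z
  simp [lmLR_apply]

end General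
end

-- ===================== statement defs =====================
noncomputable section
open Matrix


-- ===================== End operators =====================

def Lend (n : ℕ) : Module.End ℂ (Matrix (Fin (2*n)) (Fin (2*n)) ℂ) :=
  lmLR (LamD2 n) (LamTm n)

def Bnd (n : ℕ) : Module.End ℂ (Matrix (Fin (2*n)) (Fin (2*n)) ℂ) :=
  lmTR (-(qD2 n)) (qD2 n)

def Eend (n : ℕ) (μ : ℂ) : Module.End ℂ (Matrix (Fin (2*n)) (Fin (2*n)) ℂ) :=
  1 + μ⁻¹ • Lend n + (μ⁻¹)^2 • (Lend n * Lend n) + (μ⁻¹)^3 • (Lend n * (Lend n * Lend n))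

def Pend (n : ℕ) (μ : ℂ) : Module.End ℂ (Matrix (Fin (2*n)) (Fin (2*n)) ℂ) :=
  (8:ℂ)⁻¹ • ((1 + Bnd n) * Eend n μ)

section EndLemmas
variable {n : ℕ} (hn : 3 ≤ n)
include hn
set_option linter.unusedSectionVars false

-- primed assoc helpers
lemma q_comm_lam' (X : Matrix (Fin (2*n)) (Fin (2*n)) ℂ) :
    qD2 n * (LamD2 n * X) = LamD2 n * (qD2 n * X) := by
  rw [← Matrix.mul_assoc, q_comm_lam hn, Matrix.mul_assoc]

lemma q_mul_q' (X : Matrix (Fin (2*n)) (Fin (2*n)) ℂ) :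
    qD2 n * (qD2 n * X) = X := by
  rw [← Matrix.mul_assoc, q_mul_q hn, Matrix.one_mul]

lemma lam_quad : LamD2 n * (LamD2 n * (LamD2 n * LamD2 n)) = 1 := by
  have h4 : LamD2 n ^ 4 = LamD2 n * (LamD2 n * (LamD2 n * LamD2 n)) := by
    simp [pow_succ, Matrix.mul_assoc]
  rw [← h4, lam_pow4 hn]

lemma lam_quad' (X : Matrix (Fin (2*n)) (Fin (2*n)) ℂ) :
    LamD2 n * (LamD2 n * (LamD2 n * (LamD2 n * X))) = X := by
  calc LamD2 n * (LamD2 n * (LamD2 n * (LamD2 n * X)))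
      = LamD2 n * (LamD2 n * (LamD2 n * LamD2 n)) * X := by
        simp [Matrix.mul_assoc]
    _ = X := by rw [lam_quad hn, Matrix.one_mul]

lemma lamT_quad : LamTm n * (LamTm n * (LamTm n * LamTm n)) = 1 := by
  have h : LamTm n * (LamTm n * (LamTm n * LamTm n))
      = (LamD2 n * (LamD2 n * (LamD2 n * LamD2 n)))ᵀ := by
    simp [Matrix.transpose_mul, lam_transpose hn, Matrix.mul_assoc]
  rw [h, lam_quad hn, Matrix.transpose_one]

-- End-level identities
lemma hL2 : Lend n * Lend n = lmLR (LamD2 n * LamD2 n) (LamTm n * LamTm n) := by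
  rw [Lend, lmLR_mul_lmLR]

lemma hL3 : Lend n * (Lend n * Lend n)
    = lmLR (LamD2 n * (LamD2 n * LamD2 n)) ((LamTm n * LamTm n) * LamTm n) := by
  rw [hL2 hn, Lend, lmLR_mul_lmLR]

lemma hL4 : Lend n * (Lend n * (Lend n * Lend n)) = 1 := by
  rw [hL3 hn, Lend, lmLR_mul_lmLR]
  have h1 : LamD2 n * (LamD2 n * (LamD2 n * LamD2 n)) = 1 := lam_quad hn
  have h2 : LamTm n * LamTm n * LamTm n * LamTm n = 1 := by
    have := lamT_quad hn
    rw [← this]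
    simp [Matrix.mul_assoc]
  rw [h1, h2, lmLR_one]

lemma hB2 : Bnd n * Bnd n = 1 := by
  rw [Bnd, lmTR_mul_lmTR]
  have h1 : -qD2 n * (qD2 n)ᵀ = -(1 : Matrix (Fin (2*n)) (Fin (2*n)) ℂ) := by
    rw [q_transpose hn, Matrix.neg_mul, q_mul_q hn]
  have h2 : (-qD2 n)ᵀ * qD2 n = -(1 : Matrix (Fin (2*n)) (Fin (2*n)) ℂ) := by
    rw [Matrix.transpose_neg, q_transpose hn, Matrix.neg_mul, q_mul_q hn]
  rw [h1, h2]
  apply LinearMap.ext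
  intro Z
  simp [lmLR_apply]

lemma hBL : Bnd n * Lend n = Lend n * Bnd n := by
  rw [Bnd, Lend, lmTR_mul_lmLR, lmLR_mul_lmTR]
  rw [lamT_transpose hn, lam_transpose hn]
  rw [Matrix.neg_mul, Matrix.mul_neg, q_comm_lam hn, q_comm_lamT hn]

end EndLemmas
end

noncomputable section
open Matrix LinearMap
set_option linter.unusedSectionVars false

section Proj
variable {n : ℕ} (hn : 3 ≤ n) {μ : ℂ} (hμ : μ^4 = 1)
include hn hμ

lemma mu_ne : μ ≠ 0 := by
  intro h
  rw [h] at hμ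
  norm_num at hμ

lemma mu_inv_cube : (μ⁻¹)^3 = μ := by
  rw [inv_pow]
  exact inv_eq_of_mul_eq_one_left (by rw [← pow_succ']; exact hμ)

lemma mu_mul_inv : μ * μ⁻¹ = 1 := mul_inv_cancel₀ (mu_ne hn hμ)

lemma mu_mul_inv2 : μ * (μ⁻¹)^2 = μ⁻¹ := by
  rw [pow_two, ← mul_assoc, mu_mul_inv hn hμ, one_mul]

lemma mu_mul_inv3 : μ * (μ⁻¹)^3 = (μ⁻¹)^2 := by
  rw [pow_succ', ← mul_assoc, mu_mul_inv hn hμ, one_mul]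

lemma hLE : Lend n * Eend n μ = μ • Eend n μ := by
  rw [Eend]
  rw [mul_add, mul_add, mul_add, mul_one, mul_smul_comm, mul_smul_comm, mul_smul_comm,
    hL4 hn]
  rw [smul_add, smul_add, smul_add, smul_smul, smul_smul, smul_smul,
    mu_mul_inv hn hμ, mu_mul_inv2 hn hμ, mu_mul_inv3 hn hμ, one_smul]
  rw [mu_inv_cube hn hμ]
  abel

lemma hBP : Bnd n * Pend n μ = Pend n μ := by
  rw [Pend, mul_smul_comm]
  congr 1
  rw [← mul_assoc, mul_one_add, hB2 hn]
  rw [show (Bnd n + 1) = 1 + Bnd n from by abel]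

lemma hLP : Lend n * Pend n μ = μ • Pend n μ := by
  rw [Pend, mul_smul_comm, smul_comm]
  congr 1
  rw [← mul_assoc, mul_one_add, ← hBL hn, ← one_add_mul, mul_assoc, hLE hn hμ,
    mul_smul_comm]

lemma bnd_fix_iff (Z : Matrix (Fin (2*n)) (Fin (2*n)) ℂ) :
    (Z * qD2 n + qD2 n * Zᵀ = 0) ↔ Bnd n Z = Z := by
  rw [Bnd, lmTR_apply]
  constructor
  · intro h
    have h2 : qD2 n * Zᵀ = -(Z * qD2 n) := by
      rw [eq_neg_iff_add_eq_zero, add_comm]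
      exact h
    rw [Matrix.neg_mul, Matrix.neg_mul, h2, Matrix.neg_mul, neg_neg,
      Matrix.mul_assoc Z, q_mul_q hn, Matrix.mul_one]
  · intro h
    have h2 := congrArg (fun W => W * qD2 n) h
    rw [Matrix.mul_assoc (-(qD2 n) * Zᵀ), q_mul_q hn, Matrix.mul_one, Matrix.neg_mul] at h2
    rw [← h2]
    abel

lemma mem_eigD_iff (Z : Matrix (Fin (2*n)) (Fin (2*n)) ℂ) :
    Z ∈ eigD n μ ↔ (Bnd n Z = Z ∧ Lend n Z = μ • Z) := by
  have hmem : Z ∈ eigD n μ ↔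
      ((Z * qD2 n + qD2 n * Zᵀ = 0) ∧ LamD2 n * Z * (LamD2 n)⁻¹ = μ • Z) := Iff.rfl
  rw [hmem, lam_inv hn, bnd_fix_iff hn hμ]
  have h2 : (LamD2 n * Z * LamTm n = μ • Z) ↔ (Lend n Z = μ • Z) := Iff.rfl
  rw [h2]

lemma mem_soD2_iff (Z : Matrix (Fin (2*n)) (Fin (2*n)) ℂ) :
    Z ∈ soD2 n ↔ Bnd n Z = Z := by
  have hmem : Z ∈ soD2 n ↔ (Z * qD2 n + qD2 n * Zᵀ = 0) := Iff.rfl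
  rw [hmem, bnd_fix_iff hn hμ]

lemma isProj_Pend : LinearMap.IsProj (eigD n μ) (Pend n μ) := by
  constructor
  · intro x
    rw [mem_eigD_iff hn hμ]
    constructor
    · exact DFunLike.congr_fun (hBP hn hμ) x
    · have := DFunLike.congr_fun (hLP hn hμ) x
      simpa using this
  · intro x hx
    rw [mem_eigD_iff hn hμ] at hx
    obtain ⟨hB, hL⟩ := hx
    have c2 : (Lend n * Lend n) x = (μ * μ) • x := by
      rw [Module.End.mul_apply, hL, LinearMap.map_smul, hL, smul_smul]
    have c3 : (Lend n * (Lend n * Lend n)) x = (μ * μ * μ) • x := by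
      rw [Module.End.mul_apply, c2, LinearMap.map_smul, hL, smul_smul]
    have hEx : Eend n μ x = (4:ℂ) • x := by
      rw [Eend]
      simp only [LinearMap.add_apply, LinearMap.smul_apply, Module.End.one_apply]
      rw [hL, c2, c3, smul_smul, smul_smul, smul_smul]
      have e1 : μ⁻¹ * μ = 1 := inv_mul_cancel₀ (mu_ne hn hμ)
      have e2 : (μ⁻¹)^2 * (μ * μ) = 1 := by
        rw [inv_pow, show μ * μ = μ^2 from (sq μ).symm]
        exact inv_mul_cancel₀ (pow_ne_zero 2 (mu_ne hn hμ))
      have e3 : (μ⁻¹)^3 * (μ * μ * μ) = 1 := by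
        rw [inv_pow, show μ * μ * μ = μ^3 from by ring]
        exact inv_mul_cancel₀ (pow_ne_zero 3 (mu_ne hn hμ))
      rw [e1, e2, e3, one_smul]
      rw [show (4:ℂ) • x = x + x + x + x from by
        rw [show (4:ℂ) = 1 + 1 + 1 + 1 from by norm_num, add_smul, add_smul, add_smul, one_smul]]
    rw [Pend]
    simp only [LinearMap.smul_apply, Module.End.mul_apply, LinearMap.add_apply,
      Module.End.one_apply]
    rw [hEx, LinearMap.map_smul, hB]
    rw [← add_smul, smul_smul]
    norm_num

end Proj
end

noncomputable section
open Matrix LinearMap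
set_option linter.unusedSectionVars false

section TraceP
variable {n : ℕ} (hn : 3 ≤ n)
include hn

lemma tr_lamT2 : (LamTm n * LamTm n).trace = ((2*n - 4 : ℕ) : ℂ) := by
  have h : LamTm n * LamTm n = (LamD2 n * LamD2 n)ᵀ := by
    rw [Matrix.transpose_mul, lam_transpose hn]
  rw [h, Matrix.trace_transpose, tr_lam2 hn]

lemma tE0 : LinearMap.trace ℂ _ (1 : Module.End ℂ (Matrix (Fin (2*n)) (Fin (2*n)) ℂ))
    = ((2*n : ℕ) : ℂ) * ((2*n : ℕ) : ℂ) := by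
  rw [← lmLR_one, trace_lmLR, tr_one_mat hn]

lemma tE1 : LinearMap.trace ℂ _ (Lend n) = 0 := by
  rw [Lend, trace_lmLR, tr_lam hn, zero_mul]

lemma tE2 : LinearMap.trace ℂ _ (Lend n * Lend n)
    = ((2*n - 4 : ℕ) : ℂ) * ((2*n - 4 : ℕ) : ℂ) := by
  rw [hL2 hn, trace_lmLR, tr_lam2 hn, tr_lamT2 hn]

lemma tE3 : LinearMap.trace ℂ _ (Lend n * (Lend n * Lend n)) = 0 := by
  rw [hL3 hn, trace_lmLR, tr_lam3 hn, zero_mul]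

lemma tB0 : LinearMap.trace ℂ _ (Bnd n) = -((2*n : ℕ) : ℂ) := by
  rw [Bnd, trace_lmTR, q_transpose hn, Matrix.neg_mul, q_mul_q hn, Matrix.trace_neg,
    tr_one_mat hn]

lemma tB1 : LinearMap.trace ℂ _ (Bnd n * Lend n) = -((2*n - 4 : ℕ) : ℂ) := by
  rw [Bnd, Lend, lmTR_mul_lmLR, trace_lmTR]
  rw [lamT_transpose hn, lam_transpose hn]
  have h : -qD2 n * LamD2 n * (LamTm n * qD2 n)ᵀ = -(LamD2 n * LamD2 n) := by
    rw [Matrix.transpose_mul, q_transpose hn, lamT_transpose hn, Matrix.neg_mul,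
      Matrix.neg_mul]
    congr 1
    simp only [Matrix.mul_assoc, q_comm_lam' hn, q_mul_q' hn, q_comm_lam hn, q_mul_q hn,
      Matrix.mul_one, Matrix.one_mul]
  rw [h, Matrix.trace_neg, tr_lam2 hn]

lemma tB2 : LinearMap.trace ℂ _ (Bnd n * (Lend n * Lend n)) = -((2*n : ℕ) : ℂ) := by
  rw [hL2 hn, Bnd, lmTR_mul_lmLR, trace_lmTR]
  have h1 : (LamTm n * LamTm n)ᵀ = LamD2 n * LamD2 n := by
    rw [Matrix.transpose_mul, lamT_transpose hn]
  have h2 : (LamD2 n * LamD2 n)ᵀ = LamTm n * LamTm n := by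
    rw [Matrix.transpose_mul, lam_transpose hn]
  rw [h1]
  have h : -qD2 n * (LamD2 n * LamD2 n) * ((LamD2 n * LamD2 n)ᵀ * qD2 n)ᵀ
      = -(1 : Matrix (Fin (2*n)) (Fin (2*n)) ℂ) := by
    rw [h2, Matrix.transpose_mul, q_transpose hn, h1, Matrix.neg_mul, Matrix.neg_mul]
    congr 1
    simp only [Matrix.mul_assoc, q_comm_lam' hn, q_mul_q' hn, q_comm_lam hn, q_mul_q hn,
      Matrix.mul_one, Matrix.one_mul]
    exact lam_quad hn
  rw [h, Matrix.trace_neg, tr_one_mat hn]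

lemma tB3 : LinearMap.trace ℂ _ (Bnd n * (Lend n * (Lend n * Lend n)))
    = -((2*n - 4 : ℕ) : ℂ) := by
  rw [hL3 hn, Bnd, lmTR_mul_lmLR, trace_lmTR]
  have hT3 : (LamTm n * LamTm n * LamTm n)ᵀ = LamD2 n * (LamD2 n * LamD2 n) := by
    rw [Matrix.transpose_mul, Matrix.transpose_mul, lamT_transpose hn]
  have hL3T : (LamD2 n * (LamD2 n * LamD2 n))ᵀ = LamTm n * LamTm n * LamTm n := by
    rw [← hT3, Matrix.transpose_transpose]
  rw [hT3]
  have h : -qD2 n * (LamD2 n * (LamD2 n * LamD2 n))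
        * ((LamD2 n * (LamD2 n * LamD2 n))ᵀ * qD2 n)ᵀ
      = -(LamD2 n * LamD2 n) := by
    rw [hL3T, Matrix.transpose_mul, q_transpose hn, hT3, Matrix.neg_mul, Matrix.neg_mul]
    congr 1
    simp only [Matrix.mul_assoc, q_comm_lam' hn, q_mul_q' hn, q_comm_lam hn, q_mul_q hn,
      Matrix.mul_one, Matrix.one_mul]
    rw [lam_quad' hn]
  rw [h, Matrix.trace_neg, tr_lam2 hn]

end TraceP
end

noncomputable section
open Matrix LinearMap
set_option linter.unusedSectionVars false

section Final
variable {n : ℕ} (hn : 3 ≤ n)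
include hn

lemma trace_Pend (μ : ℂ) :
    LinearMap.trace ℂ _ (Pend n μ)
      = (8:ℂ)⁻¹ * (((2*n : ℕ) : ℂ) * ((2*n : ℕ) : ℂ)
          + (μ⁻¹)^2 * (((2*n - 4 : ℕ) : ℂ) * ((2*n - 4 : ℕ) : ℂ))
          - ((2*n : ℕ) : ℂ) - μ⁻¹ * ((2*n - 4 : ℕ) : ℂ)
          - (μ⁻¹)^2 * ((2*n : ℕ) : ℂ) - (μ⁻¹)^3 * ((2*n - 4 : ℕ) : ℂ)) := by
  rw [Pend, LinearMap.map_smul]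
  rw [one_add_mul (Bnd n) (Eend n μ)]
  rw [show Bnd n * Eend n μ = Bnd n + μ⁻¹ • (Bnd n * Lend n)
      + (μ⁻¹)^2 • (Bnd n * (Lend n * Lend n))
      + (μ⁻¹)^3 • (Bnd n * (Lend n * (Lend n * Lend n))) from by
    rw [Eend, mul_add, mul_add, mul_add, mul_one, mul_smul_comm, mul_smul_comm,
      mul_smul_comm]]
  rw [Eend]
  simp only [map_add, LinearMap.map_smul, smul_eq_mul]
  rw [tE0 hn, tE1 hn, tE2 hn, tE3 hn, tB0 hn, tB1 hn, tB2 hn, tB3 hn]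
  ring

lemma finrank_eigD_cast (μ : ℂ) (hμ : μ^4 = 1) :
    ((Module.finrank ℂ (eigD n μ) : ℕ) : ℂ)
      = (8:ℂ)⁻¹ * (((2*n : ℕ) : ℂ) * ((2*n : ℕ) : ℂ)
          + (μ⁻¹)^2 * (((2*n - 4 : ℕ) : ℂ) * ((2*n - 4 : ℕ) : ℂ))
          - ((2*n : ℕ) : ℂ) - μ⁻¹ * ((2*n - 4 : ℕ) : ℂ)
          - (μ⁻¹)^2 * ((2*n : ℕ) : ℂ) - (μ⁻¹)^3 * ((2*n - 4 : ℕ) : ℂ)) := by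
  rw [← trace_Pend hn μ]
  exact ((isProj_Pend hn hμ).trace).symm

end Final
end

noncomputable section
open Matrix LinearMap
set_option linter.unusedSectionVars false

section Dims
variable {n : ℕ} (hn : 3 ≤ n)
include hn

lemma cast2n : ((2*n : ℕ) : ℂ) = 2*(n:ℂ) := by push_cast; ring

lemma cast2n4 : ((2*n - 4 : ℕ) : ℂ) = 2*(n:ℂ) - 4 := by
  have h : (4:ℕ) ≤ 2*n := by omega
  push_cast [Nat.cast_sub h]
  ring

lemma dim_one : Module.finrank ℂ (eigD n 1) = n^2 - 3*n + 3 := by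
  apply Nat.cast_injective (R := ℂ)
  rw [finrank_eigD_cast hn 1 (by norm_num)]
  have h3n : 3*n ≤ n^2 := by nlinarith
  rw [cast2n hn, cast2n4 hn]
  push_cast [Nat.cast_sub h3n]
  norm_num
  ring

lemma dim_negone : Module.finrank ℂ (eigD n (-1)) = (n-1)^2 := by
  apply Nat.cast_injective (R := ℂ)
  rw [finrank_eigD_cast hn (-1) (by norm_num)]
  have h1 : (1:ℕ) ≤ n := by omega
  rw [cast2n hn, cast2n4 hn]
  push_cast [Nat.cast_sub h1]
  norm_num
  ring

lemma dim_I : Module.finrank ℂ (eigD n Complex.I) = 2*n - 2 := by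
  apply Nat.cast_injective (R := ℂ)
  have hμ : Complex.I^4 = 1 := by
    rw [show (4:ℕ) = 2*2 from rfl, pow_mul, Complex.I_sq]
    norm_num
  rw [finrank_eigD_cast hn Complex.I hμ]
  have h2 : (2:ℕ) ≤ 2*n := by omega
  rw [cast2n hn, cast2n4 hn, Complex.inv_I]
  have hI2 : (-Complex.I)^2 = -1 := by rw [neg_sq, Complex.I_sq]
  have hI3 : (-Complex.I)^3 = Complex.I := by
    rw [pow_succ, hI2]
    ring
  rw [hI2, hI3]
  push_cast [Nat.cast_sub h2]
  ring

lemma dim_negI : Module.finrank ℂ (eigD n (-Complex.I)) = 2*n - 2 := by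
  apply Nat.cast_injective (R := ℂ)
  have hμ : (-Complex.I)^4 = 1 := by
    rw [show (4:ℕ) = 2*2 from rfl, pow_mul, neg_sq, Complex.I_sq]
    norm_num
  rw [finrank_eigD_cast hn (-Complex.I) hμ]
  have h2 : (2:ℕ) ≤ 2*n := by omega
  have hinv : (-Complex.I)⁻¹ = Complex.I := by
    rw [inv_neg, Complex.inv_I, neg_neg]
  rw [cast2n hn, cast2n4 hn, hinv]
  have hI3 : (Complex.I)^3 = -Complex.I := by
    rw [pow_succ, Complex.I_sq]
    ring
  rw [Complex.I_sq, hI3]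
  push_cast [Nat.cast_sub h2]
  ring

end Dims
end

noncomputable section
open Matrix LinearMap
set_option linter.unusedSectionVars false

section Parts
variable {n : ℕ} (hn : 3 ≤ n)
include hn

lemma part3_holds : ∀ Z ∈ soD2 n, LamD2 n * Z * (LamD2 n)⁻¹ ∈ soD2 n := by
  intro Z hZ
  rw [mem_soD2_iff hn (μ := 1) (by norm_num)] at hZ
  rw [lam_inv hn]
  have hLZ : LamD2 n * Z * LamTm n = Lend n Z := rfl
  rw [hLZ, mem_soD2_iff hn (μ := 1) (by norm_num)]
  have h := DFunLike.congr_fun (hBL hn) Z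
  simp only [Module.End.mul_apply] at h
  rw [h, hZ]

lemma rPerm_symm : (rPerm n).symm = rPerm n := by
  apply Equiv.ext; intro i
  rw [Equiv.symm_apply_eq, Fin.ext_iff, rPerm_val, rPerm_val]
  have := i.isLt
  omega

lemma part4_holds : ∃ Z ∈ soD2 n, LamD2 n ^ 2 * Z ≠ Z * LamD2 n ^ 2 := by
  have h2n : 0 < 2*n := by omega
  have pa : (0:ℕ) < 2*n := by omega
  have pb : n - 1 < 2*n := by omega
  have pc : n < 2*n := by omega
  have pd : 2*n - 1 < 2*n := by omega
  set a : Fin (2*n) := ⟨0, pa⟩ with ha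
  set b : Fin (2*n) := ⟨n-1, pb⟩ with hb
  set c : Fin (2*n) := ⟨n, pc⟩ with hc
  set d : Fin (2*n) := ⟨2*n-1, pd⟩ with hd
  refine ⟨Matrix.single a b 1 - Matrix.single c d 1, ?_, ?_⟩
  · -- membership in soD2
    show (Matrix.single a b 1 - Matrix.single c d 1) * qD2 n
        + qD2 n * (Matrix.single a b 1 - Matrix.single c d 1)ᵀ = 0
    rw [qD2_eq hn, mat_mul_PM, PM_mul_mat, rPerm_symm hn]
    ext i j
    have hi := i.isLt
    have hj := j.isLt
    simp only [Matrix.add_apply, Matrix.submatrix_apply, id_eq, Matrix.transpose_apply,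
      Matrix.zero_apply, Matrix.sub_apply, Matrix.single,
      Matrix.of_apply, ha, hb, hc, hd, Fin.ext_iff, rPerm_val]
    simp only [eq_comm (a := (0:ℕ)), eq_comm (a := n - 1), eq_comm (a := n), eq_comm (a := 2*n-1)]
    split_ifs <;> first | (exfalso; omega) | norm_num
  · -- does not commute with Λ²
    -- permutation values
    have hvb : tPerm n b = d := by
      apply Fin.ext
      have h := tPerm_val hn b
      have e : (b : ℕ) = n - 1 := rfl
      rw [e, show n - 1 + 1 = n from by omega, sig2 hn] at h
      have e2 : (d : ℕ) = 2*n - 1 := rfl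
      rw [e2]
      omega
    have hva : tPerm n a = b := by
      apply Fin.ext
      have h := tPerm_val hn a
      have e : (a : ℕ) = 0 := rfl
      rw [e, show (0:ℕ) + 1 = 1 from rfl, sig1 hn] at h
      have e2 : (b : ℕ) = n - 1 := rfl
      rw [e2]
      omega
    have hvd : tPerm n d = c := by
      apply Fin.ext
      have h := tPerm_val hn d
      have e : (d : ℕ) = 2*n - 1 := rfl
      rw [e, show 2*n - 1 + 1 = 2*n from by omega, sig4 hn] at h
      have e2 : (c : ℕ) = n := rfl
      rw [e2]
      omega
    have hu1 : (tPerm n).symm d = b := by rw [Equiv.symm_apply_eq, hvb]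
    have hu2 : (tPerm n).symm b = a := by rw [Equiv.symm_apply_eq, hva]
    -- entry values
    have hne1 : ¬(c = a ∧ d = b) := by
      intro hcon
      have := congrArg (fun x : Fin (2*n) => (x:ℕ)) hcon.1
      simp only [ha, hc] at this
      omega
    have hne2 : ¬(a = d ∧ b = c) := by
      intro hcon
      have := congrArg (fun x : Fin (2*n) => (x:ℕ)) hcon.1
      simp only [ha, hd] at this
      omega
    have hne3 : ¬(c = d ∧ d = c) := by
      intro hcon
      have := congrArg (fun x : Fin (2*n) => (x:ℕ)) hcon.1
      simp only [hc, hd] at this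
      omega
    have hZ1 : (Matrix.single a b 1 - Matrix.single c d 1 : 
        Matrix (Fin (2*n)) (Fin (2*n)) ℂ) a b = 1 := by
      rw [Matrix.sub_apply, Matrix.single_apply_same]
      rw [Matrix.single_apply_of_ne _ _ _ _ _ hne1]
      norm_num
    have hZ2 : (Matrix.single a b 1 - Matrix.single c d 1 :
        Matrix (Fin (2*n)) (Fin (2*n)) ℂ) d c = 0 := by
      rw [Matrix.sub_apply]
      rw [Matrix.single_apply_of_ne _ _ _ _ _ hne2]
      rw [Matrix.single_apply_of_ne _ _ _ _ _ hne3]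
      norm_num
    intro heq
    have hent := Matrix.ext_iff.mpr heq d b
    rw [pow_two, LamD2_eq hn] at hent
    rw [Matrix.mul_assoc, PM_mul_mat, PM_mul_mat] at hent
    rw [← Matrix.mul_assoc, mat_mul_PM, mat_mul_PM] at hent
    simp only [Matrix.submatrix_apply, id_eq, Equiv.symm_symm] at hent
    rw [hu1, hu2, hvb, hvd] at hent
    rw [hZ1, hZ2] at hent
    norm_num at hent

end Parts

end

/-- for odd `n ≥ 3`, the permutation matrix `Λ` preserves the form `q`, has
`Λ⁴ = Id`, conjugation by `Λ` preserves so(2n,ℂ) and has order exactly 4 on it, and its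
eigenspaces in so(2n,ℂ) for the eigenvalues `1, i, −1, −i` have dimensions
`n²−3n+3`, `2n−2`, `(n−1)²`, `2n−2` respectively. -/
theorem stmt_14 (n : ℕ) (hn : 3 ≤ n) (hodd : Odd n) :
    (LamD2 n)ᵀ * qD2 n * LamD2 n = qD2 n ∧
    LamD2 n ^ 4 = 1 ∧
    (∀ Z ∈ soD2 n, LamD2 n * Z * (LamD2 n)⁻¹ ∈ soD2 n) ∧
    (∃ Z ∈ soD2 n, LamD2 n ^ 2 * Z ≠ Z * LamD2 n ^ 2) ∧
    Module.finrank ℂ (eigD n 1) = n^2 - 3*n + 3 ∧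
    Module.finrank ℂ (eigD n Complex.I) = 2*n - 2 ∧
    Module.finrank ℂ (eigD n (-1)) = (n-1)^2 ∧
    Module.finrank ℂ (eigD n (-Complex.I)) = 2*n - 2 :=
  ⟨part1_holds hn, lam_pow4 hn, part3_holds hn, part4_holds hn,
    dim_one hn, dim_I hn, dim_negone hn, dim_negI hn⟩

end
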